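/- Let G be the group presented by ⟨x, y ∣ x² = y³, (xy⁻¹)⁴ = x²⟩. (This is the fundamental group of 2-surgery on the right-handed trefoil: it is the quotient of the trefoil group ⟨x, y ∣ x² = y³⟩ by the surgery relation μ²λ = 1, where μ = xy⁻¹ is a meridian and λ = x²μ⁻⁶ is the longitude, and μ²λ = x²μ⁻⁴ since x² is central.) Then there exists a group homomorphism ρ from G to the multiplicative group of unit quaternions whose image is nonabelian; that is, G admits an irreducible SU(2)-representation. -/

import Mathlib

/-- The relators `x²y⁻³` and `(xy⁻¹)⁴x⁻²` of the presentation
`⟨x, y ∣ x² = y³, (xy⁻¹)⁴ = x²⟩` of the fundamental group of `2`-surgery on the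
right-handed trefoil, with `x = FreeGroup.of 0` and `y = FreeGroup.of 1`. -/
def trefoilTwoSurgeryRels : Set (FreeGroup (Fin 2)) :=
  {FreeGroup.of 0 ^ 2 * (FreeGroup.of 1 ^ 3)⁻¹,
   (FreeGroup.of 0 * (FreeGroup.of 1)⁻¹) ^ 4 * (FreeGroup.of 0 ^ 2)⁻¹}

private noncomputable def qX : Quaternion ℝ := ⟨0, 1, 0, 0⟩
private noncomputable def qY : Quaternion ℝ := ⟨1/2, Real.sqrt 2 / 2, 1/2, 0⟩
private noncomputable def qYi : Quaternion ℝ := ⟨1/2, -(Real.sqrt 2 / 2), -(1/2), 0⟩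

private lemma s2 : Real.sqrt 2 * Real.sqrt 2 = 2 := Real.mul_self_sqrt (by norm_num)

private lemma norm_one_of_normSq_one {q : Quaternion ℝ} (h : Quaternion.normSq q = 1) :
    ‖q‖ = 1 := by
  have h2 := Quaternion.normSq_eq_norm_mul_self q
  nlinarith [norm_nonneg q]

private lemma qX_norm : ‖qX‖ = 1 := by
  apply norm_one_of_normSq_one
  rw [Quaternion.normSq_def']; simp [qX]

private lemma qY_norm : ‖qY‖ = 1 := by
  apply norm_one_of_normSq_one
  rw [Quaternion.normSq_def']
  simp only [qY]
  nlinarith [s2]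

private lemma hXY : qX^2 = qY^3 := by
  simp only [pow_succ, pow_zero, one_mul]
  ext <;> simp only [Quaternion.re_mul, Quaternion.imI_mul, Quaternion.imJ_mul, Quaternion.imK_mul] <;> simp [qX, qY, Quaternion.re_mul, Quaternion.imI_mul, Quaternion.imJ_mul, Quaternion.imK_mul] <;>
    first
      | ring1
      | linear_combination ((1:ℝ)/8) * s2
      | linear_combination ((3:ℝ)/8) * s2
      | linear_combination (Real.sqrt 2/8) * s2

private lemma hYi : qY⁻¹ = qYi := by
  apply inv_eq_of_mul_eq_one_right
  ext <;> simp only [Quaternion.re_mul, Quaternion.imI_mul, Quaternion.imJ_mul, Quaternion.imK_mul, Quaternion.re_one, Quaternion.imI_one, Quaternion.imJ_one, Quaternion.imK_one] <;> simp [qY, qYi, Quaternion.re_mul, Quaternion.imI_mul, Quaternion.imJ_mul,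
    Quaternion.imK_mul] <;>
    first
      | ring1
      | linear_combination ((1:ℝ)/4) * s2
      | linear_combination (-(1:ℝ)/4) * s2

private lemma hMu : (qX * qYi)^4 = qX^2 := by
  simp only [pow_succ, pow_zero, one_mul]
  ext <;> simp only [Quaternion.re_mul, Quaternion.imI_mul, Quaternion.imJ_mul, Quaternion.imK_mul] <;> simp [qX, qYi, Quaternion.re_mul, Quaternion.imI_mul, Quaternion.imJ_mul, Quaternion.imK_mul] <;>
    first
      | ring1
      | linear_combination ((Real.sqrt 2)^2/16 - (5:ℝ)/8) * s2
      | linear_combination (Real.sqrt 2/4) * s2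
      | linear_combination (-(Real.sqrt 2)/4) * s2

private lemma hNC : qX * qY ≠ qY * qX := by
  intro h
  have := congrArg QuaternionAlgebra.imK h
  simp only [Quaternion.imK_mul] at this
  norm_num [qX, qY, Quaternion.imK_mul] at this

private noncomputable def sX : Metric.sphere (0 : Quaternion ℝ) 1 :=
  ⟨qX, by simpa using qX_norm⟩

private noncomputable def sY : Metric.sphere (0 : Quaternion ℝ) 1 :=
  ⟨qY, by simpa using qY_norm⟩

private noncomputable def genMap : Fin 2 → Metric.sphere (0 : Quaternion ℝ) 1 :=
  ![sX, sY]

private lemma rels_mapped : ∀ r ∈ trefoilTwoSurgeryRels, FreeGroup.lift genMap r = 1 := by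
  intro r hr
  have e0 : FreeGroup.lift genMap (FreeGroup.of (0 : Fin 2)) = sX := by
    simp [genMap]
  have e1 : FreeGroup.lift genMap (FreeGroup.of (1 : Fin 2)) = sY := by
    simp [genMap]
  rcases hr with hr | hr <;> subst hr <;>
    simp only [map_mul, map_pow, map_inv, e0, e1, mul_inv_eq_one] <;>
    apply Subtype.ext <;>
    push_cast [Metric.unitSphere.coe_pow, Metric.unitSphere.coe_mul, Metric.unitSphere.coe_inv]
  · exact hXY
  · show ((qX : Quaternion ℝ) * qY⁻¹)^4 = qX^2
    rw [hYi]; exact hMu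

/-- The group `⟨x, y ∣ x² = y³, (xy⁻¹)⁴ = x²⟩` admits a homomorphism to
the group of unit quaternions (≅ SU(2)) with nonabelian image, i.e. an irreducible
SU(2)-representation. -/
theorem trefoil_two_surgery_has_irreducible_su2_rep :
    ∃ ρ : PresentedGroup trefoilTwoSurgeryRels →* (Metric.sphere (0 : Quaternion ℝ) 1),
      ∃ g h : PresentedGroup trefoilTwoSurgeryRels, ρ g * ρ h ≠ ρ h * ρ g := by
  refine ⟨PresentedGroup.toGroup rels_mapped, PresentedGroup.of 0, PresentedGroup.of 1, ?_⟩
  rw [PresentedGroup.toGroup.of, PresentedGroup.toGroup.of]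
  intro h
  apply hNC
  have := congrArg Subtype.val h
  simpa [genMap, sX, sY] using this
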